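/- In ℤ/(2p) with p an odd prime, let a be an even element with a ∉ {0, p−1, p+1} (as residues). Then exactly 3 nonzero elements y ≠ a satisfy that a·y is nil clean; i.e., deg(a) = 3 in the nil clean divisor graph. -/

import Mathlib

def IsNilCleanElem {R : Type*} [CommRing R] (x : R) : Prop :=
  ∃ e n : R, IsIdempotentElem e ∧ IsNilpotent n ∧ x = e + n

def NCVertex {R : Type*} [CommRing R] (x : R) : Prop :=
  x ≠ 0 ∧ ∃ y : R, y ≠ 0 ∧ y ≠ x ∧ IsNilCleanElem (x * y)

def NCAdj {R : Type*} [CommRing R] (x y : R) : Prop :=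
  x ≠ y ∧ NCVertex x ∧ NCVertex y ∧ IsNilCleanElem (x * y)

private lemma zmod2_cases : ∀ x : ZMod 2, x = 0 ∨ x = 1 := by decide

theorem stmt14 (p : ℕ) (hp : p.Prime) (hodd : Odd p) (a : ZMod (2 * p))
    (haeven : Even a.val) (ha0 : a ≠ 0)
    (ha1 : a ≠ (p : ZMod (2 * p)) - 1) (ha2 : a ≠ (p : ZMod (2 * p)) + 1) :
    Set.ncard {y : ZMod (2 * p) | y ≠ 0 ∧ y ≠ a ∧
      IsNilCleanElem (a * y)} = 3 := by
  haveI : Fact p.Prime := ⟨hp⟩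
  haveI : NeZero (2 * p) := ⟨mul_ne_zero two_ne_zero hp.ne_zero⟩
  have hp2 : (2 : ℕ) ≠ p := by
    rintro rfl; exact (by decide : ¬ Odd 2) hodd
  have hcop : Nat.Coprime 2 p := (Nat.coprime_primes Nat.prime_two hp).mpr hp2
  set f := ZMod.chineseRemainder hcop with hf
  -- f on natural number casts
  have hfnat : ∀ k : ℕ, f ((k : ℕ) : ZMod (2 * p)) = ((k : ZMod 2), (k : ZMod p)) := by
    intro k
    rw [map_natCast]
    exact Prod.ext (Prod.fst_natCast k) (Prod.snd_natCast k)
  -- nilpotents are zero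
  have hnil : ∀ n : ZMod (2 * p), IsNilpotent n → n = 0 := by
    intro n hn
    have h1 : IsNilpotent ((f n).1) :=
      hn.map ((RingHom.fst (ZMod 2) (ZMod p)).comp (f : ZMod (2 * p) →+* ZMod 2 × ZMod p))
    have h2 : IsNilpotent ((f n).2) :=
      hn.map ((RingHom.snd (ZMod 2) (ZMod p)).comp (f : ZMod (2 * p) →+* ZMod 2 × ZMod p))
    have e1 : (f n).1 = 0 := h1.eq_zero
    have e2 : (f n).2 = 0 := h2.eq_zero
    have : f n = f 0 := by rw [map_zero]; exact Prod.ext e1 e2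
    exact f.injective this
  have hnc : ∀ x : ZMod (2 * p), IsNilCleanElem x ↔ IsIdempotentElem x := by
    intro x
    constructor
    · rintro ⟨e, n, he, hn, rfl⟩; rw [hnil n hn, add_zero]; exact he
    · intro h; exact ⟨x, 0, h, IsNilpotent.zero, (add_zero x).symm⟩
  -- idempotents in ZMod p
  have hidp : ∀ v : ZMod p, IsIdempotentElem v ↔ (v = 0 ∨ v = 1) := by
    intro v
    constructor
    · intro h
      have : v * (v - 1) = 0 := by
        have := h; unfold IsIdempotentElem at this; ring_nf; linear_combination this
      rcases mul_eq_zero.mp this with h' | h'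
      · exact Or.inl h'
      · exact Or.inr (by linear_combination h')
    · rintro (rfl | rfl) <;> simp [IsIdempotentElem]
  -- idempotency through f
  have hidf : ∀ x : ZMod (2 * p), IsIdempotentElem x ↔ IsIdempotentElem (f x) := by
    intro x
    constructor
    · intro h
      show f x * f x = f x
      rw [← map_mul]; exact congrArg f h
    · intro h
      have : f (x * x) = f x := by rw [map_mul]; exact h
      exact f.injective this
  have hidprod : ∀ u : ZMod 2, ∀ v : ZMod p,
      IsIdempotentElem ((u, v) : ZMod 2 × ZMod p) ↔ IsIdempotentElem u ∧ IsIdempotentElem v := by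
    intro u v
    constructor
    · intro h; exact ⟨congrArg Prod.fst h, congrArg Prod.snd h⟩
    · rintro ⟨h1, h2⟩; exact Prod.ext h1 h2
  have hid2 : ∀ u : ZMod 2, IsIdempotentElem u := by
    show ∀ u : ZMod 2, u * u = u
    decide
  -- components of f a
  have hfa1 : (f a).1 = 0 := by
    have ha' : a = ((a.val : ℕ) : ZMod (2 * p)) := (ZMod.natCast_zmod_val a).symm
    rw [ha', hfnat]
    simpa using (ZMod.natCast_eq_zero_iff a.val 2).mpr haeven.two_dvd
  set α := (f a).2 with hα
  have hfa : f a = (0, α) := Prod.ext hfa1 rfl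
  -- f p, f (p+1), f (p-1)
  have hp2' : ((p : ℕ) : ZMod 2) = 1 := by
    rw [← ZMod.natCast_mod, Nat.odd_iff.mp hodd]; norm_num
  have hfp : f ((p : ℕ) : ZMod (2 * p)) = (1, 0) := by
    rw [hfnat]; exact Prod.ext hp2' (ZMod.natCast_self p)
  have h11 : (1 : ZMod 2) + 1 = 0 := by decide
  have hfp1 : f (((p : ℕ) : ZMod (2 * p)) + 1) = (0, 1) := by
    rw [map_add, hfp, map_one]
    exact Prod.ext (by simpa using h11) (by simp)
  have hfpm1 : f (((p : ℕ) : ZMod (2 * p)) - 1) = (0, -1) := by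
    rw [map_sub, hfp, map_one]
    refine Prod.ext ?_ (by simp)
    show (1 : ZMod 2) - 1 = 0
    decide
  -- α is not 0, 1, -1
  have hα0 : α ≠ 0 := by
    intro h
    apply ha0
    apply f.injective
    rw [hfa, h, map_zero]
    rfl
  have hα1 : α ≠ 1 := by
    intro h
    apply ha2
    apply f.injective
    rw [hfa, h, hfp1]
  have hαm1 : α ≠ -1 := by
    intro h
    apply ha1
    apply f.injective
    rw [hfa, h, hfpm1]
  set β := α⁻¹ with hβ
  have hβ0 : β ≠ 0 := inv_ne_zero hα0
  have hαβ : α * β = 1 := mul_inv_cancel₀ hα0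
  have hβα : β ≠ α := by
    intro h
    have h2 : α * α = 1 := by rw [h] at hαβ; exact hαβ
    have : (α - 1) * (α + 1) = 0 := by ring_nf; linear_combination h2
    rcases mul_eq_zero.mp this with h' | h'
    · exact hα1 (by linear_combination h')
    · exact hαm1 (by linear_combination h')
  -- the key characterization of the nil clean condition
  have hkey : ∀ y : ZMod (2 * p),
      IsNilCleanElem (a * y) ↔ (α * (f y).2 = 0 ∨ α * (f y).2 = 1) := by
    intro y
    rw [hnc, hidf, map_mul, hfa]
    have : ((0, α) : ZMod 2 × ZMod p) * f y = (0, α * (f y).2) := by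
      ext <;> simp
    rw [this, hidprod, hidp]
    simp [hid2]
  -- the set equals the explicit triple
  have hset : {y : ZMod (2 * p) | y ≠ 0 ∧ y ≠ a ∧ IsNilCleanElem (a * y)} =
      {((p : ℕ) : ZMod (2 * p)), f.symm (0, β), f.symm (1, β)} := by
    ext y
    simp only [Set.mem_setOf_eq, Set.mem_insert_iff, Set.mem_singleton_iff]
    constructor
    · rintro ⟨hy0, hya, hnc'⟩
      rcases (hkey y).mp hnc' with h | h
      · have hy2 : (f y).2 = 0 := by
          rcases mul_eq_zero.mp h with h' | h'
          · exact absurd h' hα0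
          · exact h'
        rcases zmod2_cases (f y).1 with h1 | h1
        · exfalso; apply hy0; apply f.injective
          rw [map_zero]; exact Prod.ext h1 hy2
        · left; apply f.injective
          rw [hfp]; exact Prod.ext h1 hy2
      · have hy2 : (f y).2 = β := by
          rw [hβ]
          exact eq_inv_of_mul_eq_one_right h
        rcases zmod2_cases (f y).1 with h1 | h1
        · right; left
          apply f.injective
          rw [RingEquiv.apply_symm_apply]
          exact Prod.ext h1 hy2
        · right; right
          apply f.injective
          rw [RingEquiv.apply_symm_apply]
          exact Prod.ext h1 hy2
    · rintro (rfl | rfl | rfl)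
      · refine ⟨?_, ?_, (hkey _).mpr (Or.inl ?_)⟩
        · intro h
          have := congrArg f h
          rw [hfp, map_zero] at this
          exact one_ne_zero (congrArg Prod.fst this)
        · intro h
          have := congrArg f h
          rw [hfp, hfa] at this
          exact one_ne_zero (congrArg Prod.fst this)
        · rw [hfp]; simp
      · refine ⟨?_, ?_, (hkey _).mpr (Or.inr ?_)⟩
        · intro h
          have := congrArg f h
          rw [RingEquiv.apply_symm_apply, map_zero] at this
          exact hβ0 (congrArg Prod.snd this)
        · intro h
          have := congrArg f h
          rw [RingEquiv.apply_symm_apply, hfa] at this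
          exact hβα (congrArg Prod.snd this)
        · rw [RingEquiv.apply_symm_apply]; exact hαβ
      · refine ⟨?_, ?_, (hkey _).mpr (Or.inr ?_)⟩
        · intro h
          have := congrArg f h
          rw [RingEquiv.apply_symm_apply, map_zero] at this
          exact one_ne_zero (congrArg Prod.fst this)
        · intro h
          have := congrArg f h
          rw [RingEquiv.apply_symm_apply, hfa] at this
          exact one_ne_zero (congrArg Prod.fst this)
        · rw [RingEquiv.apply_symm_apply]; exact hαβ
  rw [hset]
  refine Set.ncard_eq_three.mpr ⟨_, _, _, ?_, ?_, ?_, rfl⟩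
  · intro h
    have := congrArg f h
    rw [hfp, RingEquiv.apply_symm_apply] at this
    exact one_ne_zero (congrArg Prod.fst this)
  · intro h
    have := congrArg f h
    rw [hfp, RingEquiv.apply_symm_apply] at this
    exact hβ0 (congrArg Prod.snd this).symm
  · intro h
    have := congrArg f h
    rw [RingEquiv.apply_symm_apply, RingEquiv.apply_symm_apply] at this
    exact one_ne_zero (congrArg Prod.fst this).symm
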